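/- Let (B_i)_{i≥1} be a sequence of independent events with probabilities p_i such that ∑ p_i diverges. Then with probability 1, #{i ≤ m : B_i occurs} = (1 + o(1)) ∑_{i=1}^m p_i as m → ∞. -/

import Mathlib

open Filter MeasureTheory

private lemma aux_sqrt_atTop : Tendsto Real.sqrt atTop atTop := by
  rw [tendsto_atTop_atTop]
  exact fun b => ⟨b ^ 2, fun x hx => Real.le_sqrt_of_sq_le hx⟩

private lemma aux_ratio_tendsto :
    Tendsto (fun k : ℕ => (((k : ℝ) + 1) ^ 2 + 1) / (k : ℝ) ^ 2) atTop (nhds 1) := by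
  have h0 : Tendsto (fun k : ℕ => 1 / (k : ℝ)) atTop (nhds 0) :=
    tendsto_one_div_atTop_nhds_zero_nat
  have hlim : Tendsto (fun k : ℕ => 1 + (2 * (1 / (k : ℝ)) + 2 * (1 / (k : ℝ)) ^ 2))
      atTop (nhds 1) := by
    have := (tendsto_const_nhds (x := (1 : ℝ)) (f := atTop (α := ℕ))).add
      ((h0.const_mul 2).add ((h0.pow 2).const_mul 2))
    simpa using this
  refine hlim.congr' ?_
  filter_upwards [eventually_ge_atTop 1] with k hk
  have hk0 : (k : ℝ) ≠ 0 := by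
    have : (1 : ℝ) ≤ (k : ℝ) := by exact_mod_cast hk
    positivity
  field_simp
  ring

/-- if `(B_i)` are independent events with probabilities `p_i` and
`∑ p_i` diverges, then almost surely
`#{i ≤ m : B_i occurs} = (1+o(1)) ∑_{i≤m} p_i` as `m → ∞`. -/
theorem count_events_asymptotic (Ω : Type) [MeasurableSpace Ω]
    (μ : Measure Ω) [IsProbabilityMeasure μ]
    (B : ℕ → Set Ω) (hmeas : ∀ i, MeasurableSet (B i))
    (hind : ProbabilityTheory.iIndepSet B μ)
    (hdiv : ¬ Summable (fun i => (μ (B i)).toReal)) :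
    ∀ᵐ ω ∂μ,
      Tendsto
        (fun m : ℕ =>
          (({i | i < m ∧ ω ∈ B i}.ncard : ℝ)) /
            ∑ i ∈ Finset.range m, (μ (B i)).toReal)
        atTop (nhds 1) := by
  classical
  set p : ℕ → ℝ := fun i => (μ (B i)).toReal with hp_def
  set X : ℕ → Ω → ℝ := fun i => (B i).indicator (fun _ => 1) with hX_def
  set S : ℕ → Ω → ℝ := fun m => ∑ i ∈ Finset.range m, X i with hS_def
  set a : ℕ → ℝ := fun m => ∑ i ∈ Finset.range m, p i with ha_def
  have hp0 : ∀ i, 0 ≤ p i := fun i => ENNReal.toReal_nonneg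
  have hp1 : ∀ i, p i ≤ 1 := fun i => by
    simpa using ENNReal.toReal_mono ENNReal.one_ne_top (prob_le_one (μ := μ) (s := B i))
  have ha_nonneg : ∀ m, 0 ≤ a m := fun m => Finset.sum_nonneg fun i _ => hp0 i
  have ha_mono : Monotone a := fun m m' h => by
    apply Finset.sum_le_sum_of_subset_of_nonneg (Finset.range_subset_range.2 h)
    intro i _ _; exact hp0 i
  have ha_top : Tendsto a atTop atTop :=
    (not_summable_iff_tendsto_nat_atTop_of_nonneg hp0).1 hdiv
  have ha_succ : ∀ m, a (m + 1) = a m + p m := fun m => by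
    simp [ha_def, Finset.sum_range_succ]
  -- basic facts about X and S
  have hXmem : ∀ i, MemLp (X i) 2 μ := fun i =>
    memLp_indicator_const 2 (hmeas i) 1 (Or.inr (measure_ne_top μ _))
  have hSapp : ∀ m ω, S m ω = ∑ i ∈ Finset.range m, X i ω := fun m ω => by
    simp [hS_def]
  have hX_nonneg : ∀ i (ω : Ω), 0 ≤ X i ω := fun i ω =>
    Set.indicator_nonneg (fun _ _ => zero_le_one) _
  have hS_nonneg : ∀ m ω, 0 ≤ S m ω := fun m ω => by
    rw [hSapp]
    exact Finset.sum_nonneg fun i _ => hX_nonneg i ω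
  have hS_mono : ∀ (ω : Ω) m m', m ≤ m' → S m ω ≤ S m' ω := fun ω m m' h => by
    rw [hSapp, hSapp]
    apply Finset.sum_le_sum_of_subset_of_nonneg (Finset.range_subset_range.2 h)
    intro i _ _; exact hX_nonneg i ω
  have hEX : ∀ i, ∫ ω, X i ω ∂μ = p i := fun i => by
    simp [hX_def, integral_indicator_const (1 : ℝ) (hmeas i), hp_def, measureReal_def]
  have hES : ∀ m, ∫ ω, S m ω ∂μ = a m := fun m => by
    have : ∫ ω, S m ω ∂μ = ∫ ω, ∑ i ∈ Finset.range m, X i ω ∂μ := by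
      congr 1; funext ω; exact hSapp m ω
    rw [this, integral_finset_sum _ fun i _ => (hXmem i).integrable one_le_two]
    simp only [hEX]
    rfl
  have hSmem : ∀ m, MemLp (S m) 2 μ := fun m =>
    memLp_finset_sum' _ fun i _ => hXmem i
  -- variance bounds
  have hXsq : ∀ i, (X i) ^ 2 = X i := fun i => by
    funext ω
    by_cases h : ω ∈ B i <;> simp [hX_def, Set.indicator_apply, h]
  have hVX : ∀ i, ProbabilityTheory.variance (X i) μ ≤ p i := fun i => by
    rw [ProbabilityTheory.variance_eq_sub (hXmem i), hXsq i]
    have := hEX i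
    simp only [this]
    nlinarith [sq_nonneg (p i), hEX i]
  have hiid := hind.iIndepFun_indicator (m := inferInstance) (β := ℝ)
  have hVS : ∀ m, ProbabilityTheory.variance (S m) μ ≤ a m := fun m => by
    rw [hS_def, ProbabilityTheory.IndepFun.variance_sum (fun i _ => hXmem i)
      (fun i _ j _ hij => hiid.indepFun hij)]
    exact Finset.sum_le_sum fun i _ => hVX i
  -- the subsequence n k = least m with a m ≥ k^2
  have hex : ∀ k : ℕ, ∃ m, (k : ℝ) ^ 2 ≤ a m := fun k =>
    (ha_top.eventually_ge_atTop _).exists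
  set n : ℕ → ℕ := fun k => Nat.find (hex k) with hn_def
  have hn1 : ∀ k : ℕ, (k : ℝ) ^ 2 ≤ a (n k) := fun k => Nat.find_spec (hex k)
  have hnle : ∀ (k m : ℕ), n k ≤ m ↔ (k : ℝ) ^ 2 ≤ a m := fun k m => by
    constructor
    · intro h; exact (hn1 k).trans (ha_mono h)
    · intro h; exact Nat.find_le h
  have hupper : ∀ k : ℕ, 1 ≤ k → a (n k) < (k : ℝ) ^ 2 + 1 := by
    intro k hk
    have hk1 : (1 : ℝ) ≤ (k : ℝ) ^ 2 := by
      have : (1 : ℝ) ≤ (k : ℝ) := by exact_mod_cast hk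
      nlinarith
    have hn_pos : 0 < n k := by
      rcases Nat.eq_zero_or_pos (n k) with h | h
      · exfalso
        have h0 := hn1 k
        rw [h] at h0
        have : a 0 = 0 := by simp [ha_def]
        rw [this] at h0
        linarith
      · exact h
    obtain ⟨j, hj⟩ : ∃ j, n k = j + 1 := ⟨n k - 1, by omega⟩
    have hlt : a j < (k : ℝ) ^ 2 := by
      by_contra h
      push_neg at h
      have := (hnle k j).2 h
      omega
    rw [hj, ha_succ]
    have := hp1 j
    linarith
  -- nonnegativity/positivity along the subsequence
  have hanpos : ∀ k : ℕ, 1 ≤ k → 0 < a (n k) := by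
    intro k hk
    have hk1 : (1 : ℝ) ≤ (k : ℝ) ^ 2 := by
      have : (1 : ℝ) ≤ (k : ℝ) := by exact_mod_cast hk
      nlinarith
    linarith [hn1 k]
  -- Borel-Cantelli: for each j, a.s. eventually |S (n (k+1)) - a (n (k+1))| < (k+1)^2/(j+1)
  have hBC : ∀ j : ℕ, ∀ᵐ ω ∂μ, ∀ᶠ k in atTop,
      |S (n (k + 1)) ω - a (n (k + 1))| < (1 / ((j : ℝ) + 1)) * ((k : ℝ) + 1) ^ 2 := by
    intro j
    set ε : ℝ := 1 / ((j : ℝ) + 1) with hε_def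
    have hε : 0 < ε := by positivity
    set E : ℕ → Set Ω := fun k =>
      {ω | ε * ((k : ℝ) + 1) ^ 2 ≤ |S (n (k + 1)) ω - a (n (k + 1))|} with hE_def
    have hc_pos : ∀ k : ℕ, 0 < ε * ((k : ℝ) + 1) ^ 2 := fun k => by positivity
    have hbound : ∀ k : ℕ, μ (E k) ≤
        ENNReal.ofReal ((((k : ℝ) + 1) ^ 2 + 1) / (ε * ((k : ℝ) + 1) ^ 2) ^ 2) := by
      intro k
      have h1 := ProbabilityTheory.meas_ge_le_variance_div_sq (μ := μ)
        (hSmem (n (k + 1))) (hc_pos k)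
      have h2 : {ω | ε * ((k : ℝ) + 1) ^ 2 ≤ |S (n (k + 1)) ω - ∫ x, S (n (k + 1)) x ∂μ|}
          = E k := by
        rw [hES]
      rw [h2] at h1
      refine h1.trans (ENNReal.ofReal_le_ofReal ?_)
      have hV : ProbabilityTheory.variance (S (n (k + 1))) μ ≤ ((k : ℝ) + 1) ^ 2 + 1 := by
        refine (hVS _).trans ?_
        have h3 := (hupper (k + 1) (by omega)).le
        push_cast at h3 ⊢
        linarith
      gcongr
    -- summability of the bounds
    set c : ℕ → ℝ := fun k => (((k : ℝ) + 1) ^ 2 + 1) / (ε * ((k : ℝ) + 1) ^ 2) ^ 2 with hc_def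
    have hc_nonneg : ∀ k, 0 ≤ c k := fun k => by positivity
    have hc_sum : Summable c := by
      have hbase : Summable (fun k : ℕ => 1 / ((k : ℝ) + 1) ^ 2) := by
        have := (summable_nat_add_iff (f := fun k : ℕ => 1 / (k : ℝ) ^ 2) 1).2
          (Real.summable_one_div_nat_pow.2 one_lt_two)
        refine this.congr fun k => ?_
        push_cast
        ring
      refine Summable.of_nonneg_of_le hc_nonneg (f := fun k : ℕ => (2 / ε ^ 2) * (1 / ((k : ℝ) + 1) ^ 2))
        (fun k => ?_) (hbase.mul_left _)
      have hk0 : (0 : ℝ) ≤ (k : ℝ) := Nat.cast_nonneg k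
      have hk1 : (1 : ℝ) ≤ ((k : ℝ) + 1) ^ 2 := by nlinarith
      rw [hc_def]
      rw [div_le_iff₀ (by positivity)]
      have hnum : ((k : ℝ) + 1) ^ 2 + 1 ≤ 2 * ((k : ℝ) + 1) ^ 2 := by nlinarith
      calc ((k : ℝ) + 1) ^ 2 + 1 ≤ 2 * ((k : ℝ) + 1) ^ 2 := hnum
        _ = 2 / ε ^ 2 * (1 / ((k : ℝ) + 1) ^ 2) * (ε * ((k : ℝ) + 1) ^ 2) ^ 2 := by
            field_simp
    have htsum : (∑' k, μ (E k)) ≠ ⊤ := by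
      refine ne_top_of_le_ne_top ?_ (ENNReal.tsum_le_tsum hbound)
      rw [← ENNReal.ofReal_tsum_of_nonneg hc_nonneg hc_sum]
      exact ENNReal.ofReal_ne_top
    filter_upwards [ae_eventually_notMem htsum] with ω hω
    filter_upwards [hω] with k hk
    rw [hE_def] at hk
    simp only [Set.mem_setOf_eq, not_le] at hk
    exact hk
  -- combine over all j
  have hae : ∀ᵐ ω ∂μ, ∀ j : ℕ, ∀ᶠ k in atTop,
      |S (n (k + 1)) ω - a (n (k + 1))| < (1 / ((j : ℝ) + 1)) * ((k : ℝ) + 1) ^ 2 :=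
    ae_all_iff.2 hBC
  filter_upwards [hae] with ω hω
  -- convergence along the subsequence
  have hq : Tendsto (fun k => S (n k) ω / a (n k)) atTop (nhds 1) := by
    rw [Metric.tendsto_atTop]
    intro ε hε
    obtain ⟨j, hj⟩ := exists_nat_one_div_lt hε
    obtain ⟨N, hN⟩ := eventually_atTop.1 (hω j)
    refine ⟨N + 1, fun k hk => ?_⟩
    obtain ⟨l, rfl⟩ : ∃ l, k = l + 1 := ⟨k - 1, by omega⟩
    have hl : N ≤ l := by omega
    have hd := hN l hl
    have hpos : 0 < a (n (l + 1)) := hanpos (l + 1) (by omega)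
    have hge : ((l : ℝ) + 1) ^ 2 ≤ a (n (l + 1)) := by
      have := hn1 (l + 1); push_cast at this; linarith
    rw [Real.dist_eq]
    have heq : S (n (l + 1)) ω / a (n (l + 1)) - 1
        = (S (n (l + 1)) ω - a (n (l + 1))) / a (n (l + 1)) := by
      field_simp
    rw [heq, abs_div, abs_of_pos hpos, div_lt_iff₀ hpos]
    calc |S (n (l + 1)) ω - a (n (l + 1))| < (1 / ((j : ℝ) + 1)) * ((l : ℝ) + 1) ^ 2 := hd
      _ ≤ (1 / ((j : ℝ) + 1)) * a (n (l + 1)) :=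
          mul_le_mul_of_nonneg_left hge (by positivity)
      _ < ε * a (n (l + 1)) := mul_lt_mul_of_pos_right hj hpos
  -- the ratio a (n (k+1)) / a (n k) tends to 1
  have hmon : ∀ k : ℕ, n k ≤ n (k + 1) := by
    intro k
    refine (hnle k (n (k + 1))).2 (le_trans ?_ (hn1 (k + 1)))
    have h0 : (0 : ℝ) ≤ (k : ℝ) := Nat.cast_nonneg k
    push_cast
    nlinarith
  have hr : Tendsto (fun k => a (n (k + 1)) / a (n k)) atTop (nhds 1) := by
    have hgle : ∀ᶠ k in atTop, (1 : ℝ) ≤ a (n (k + 1)) / a (n k) := by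
      filter_upwards [eventually_ge_atTop 1] with k hk
      rw [le_div_iff₀ (hanpos k hk), one_mul]
      exact ha_mono (hmon k)
    have hule : ∀ᶠ k in atTop,
        a (n (k + 1)) / a (n k) ≤ (((k : ℝ) + 1) ^ 2 + 1) / (k : ℝ) ^ 2 := by
      filter_upwards [eventually_ge_atTop 1] with k hk
      have h1 : a (n (k + 1)) ≤ ((k : ℝ) + 1) ^ 2 + 1 := by
        have h2 := (hupper (k + 1) (by omega)).le; push_cast at h2; linarith
      have h2 : (0 : ℝ) < (k : ℝ) ^ 2 := by
        have h3 : (1 : ℝ) ≤ (k : ℝ) := by exact_mod_cast hk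
        positivity
      exact div_le_div₀ (by positivity) h1 h2 (hn1 k)
    exact tendsto_of_tendsto_of_tendsto_of_le_of_le' tendsto_const_nhds
      aux_ratio_tendsto hgle hule
  -- the index k(m) = ⌊√(a m)⌋
  set kk : ℕ → ℕ := fun m => ⌊Real.sqrt (a m)⌋₊ with hkk_def
  have hkk_top : Tendsto kk atTop atTop :=
    (tendsto_nat_floor_atTop.comp aux_sqrt_atTop).comp ha_top
  have hkk1 : ∀ m, ((kk m : ℝ)) ^ 2 ≤ a m := by
    intro m
    have h1 : ((kk m : ℕ) : ℝ) ≤ Real.sqrt (a m) := Nat.floor_le (Real.sqrt_nonneg _)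
    calc ((kk m : ℕ) : ℝ) ^ 2 ≤ Real.sqrt (a m) ^ 2 :=
          pow_le_pow_left₀ (Nat.cast_nonneg _) h1 2
      _ = a m := Real.sq_sqrt (ha_nonneg m)
  have hkk2 : ∀ m, a m < ((kk m : ℝ) + 1) ^ 2 := fun m => by
    have := Real.lt_sq_of_sqrt_lt (Nat.lt_floor_add_one (Real.sqrt (a m)))
    push_cast at this ⊢
    exact this
  -- limits of the sandwich bounds
  have hlow : Tendsto (fun m =>
      (S (n (kk m)) ω / a (n (kk m))) / (a (n (kk m + 1)) / a (n (kk m))))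
      atTop (nhds 1) := by
    have h := (hq.div hr one_ne_zero).comp hkk_top
    simpa [Function.comp_def] using h
  have hup : Tendsto (fun m =>
      (S (n (kk m + 1)) ω / a (n (kk m + 1))) * (a (n (kk m + 1)) / a (n (kk m))))
      atTop (nhds 1) := by
    have h1 : Tendsto (fun k => S (n (k + 1)) ω / a (n (k + 1))) atTop (nhds 1) :=
      hq.comp (tendsto_add_atTop_nat 1)
    have h := (h1.mul hr).comp hkk_top
    simpa [Function.comp_def] using h
  -- rewrite the goal in terms of S and a
  have hgoal_eq : (fun m : ℕ => (({i | i < m ∧ ω ∈ B i}.ncard : ℝ)) /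
      ∑ i ∈ Finset.range m, p i) = fun m => S m ω / a m := by
    funext m
    have hset : {i | i < m ∧ ω ∈ B i}
        = ↑((Finset.range m).filter (fun i => ω ∈ B i)) := by
      ext i; simp [Finset.mem_filter, Finset.mem_range]
    have hcount : ({i | i < m ∧ ω ∈ B i}.ncard : ℝ) = S m ω := by
      rw [hset, Set.ncard_coe_finset, hSapp]
      simp only [hX_def, Set.indicator_apply]
      rw [Finset.sum_boole]
    rw [hcount]
  rw [hgoal_eq]
  -- the sandwich
  refine tendsto_of_tendsto_of_tendsto_of_le_of_le' hlow hup ?_ ?_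
  · filter_upwards [hkk_top.eventually_ge_atTop 1] with m hk
    have h1 : n (kk m) ≤ m := (hnle (kk m) m).2 (hkk1 m)
    have h2 : m < n (kk m + 1) := by
      by_contra h
      push_neg at h
      have h3 := (hnle (kk m + 1) m).1 h
      have h4 := hkk2 m
      push_cast at h3
      linarith
    have hposk : 0 < a (n (kk m)) := hanpos (kk m) hk
    have hposk1 : 0 < a (n (kk m + 1)) := hanpos (kk m + 1) (by omega)
    have hampos : 0 < a m := lt_of_lt_of_le hposk (ha_mono h1)
    have hineq : S (n (kk m)) ω / a (n (kk m + 1)) ≤ S m ω / a m :=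
      div_le_div₀ (hS_nonneg m ω) (hS_mono ω _ _ h1) hampos (ha_mono h2.le)
    calc (S (n (kk m)) ω / a (n (kk m))) / (a (n (kk m + 1)) / a (n (kk m)))
        = S (n (kk m)) ω / a (n (kk m + 1)) := by
          have hne : a (n (kk m)) ≠ 0 := hposk.ne'
          have hne1 : a (n (kk m + 1)) ≠ 0 := hposk1.ne'
          field_simp
      _ ≤ S m ω / a m := hineq
  · filter_upwards [hkk_top.eventually_ge_atTop 1] with m hk
    have h1 : n (kk m) ≤ m := (hnle (kk m) m).2 (hkk1 m)
    have h2 : m < n (kk m + 1) := by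
      by_contra h
      push_neg at h
      have h3 := (hnle (kk m + 1) m).1 h
      have h4 := hkk2 m
      push_cast at h3
      linarith
    have hposk : 0 < a (n (kk m)) := hanpos (kk m) hk
    have hposk1 : 0 < a (n (kk m + 1)) := hanpos (kk m + 1) (by omega)
    have hampos : 0 < a m := lt_of_lt_of_le hposk (ha_mono h1)
    have hineq : S m ω / a m ≤ S (n (kk m + 1)) ω / a (n (kk m)) :=
      div_le_div₀ (hS_nonneg _ _) (hS_mono ω _ _ h2.le) hposk (ha_mono h1)
    calc S m ω / a m ≤ S (n (kk m + 1)) ω / a (n (kk m)) := hineq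
      _ = (S (n (kk m + 1)) ω / a (n (kk m + 1))) * (a (n (kk m + 1)) / a (n (kk m))) := by
          field_simp
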